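/- Let n ≥ 6 and let Γ' be a signed graph of order n that attains the maximum largest eigenvalue λ1 among all unbalanced, negative-C4-free signed graphs of order n, and suppose A(Γ') has a nonnegative unit eigenvector corresponding to λ1(Γ'). Then Γ' contains a negative cycle of length 3; equivalently, the shortest negative cycle of Γ' has length 3. -/

import Mathlib

open scoped BigOperators

/-- A signed graph on the vertex set `Fin n`: a simple graph together with a
symmetric `±1` sign on each edge. -/
structure SignedGraph (n : ℕ) where
  G : SimpleGraph (Fin n)
  sign : Fin n → Fin n → ℤ
  sign_symm : ∀ i j, sign i j = sign j i
  sign_pm : ∀ i j, G.Adj i j → sign i j = 1 ∨ sign i j = -1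

namespace SignedGraph

variable {n : ℕ}

open Classical in
/-- The adjacency matrix of a signed graph, as a real matrix. -/
noncomputable def adjMatrix (Γ : SignedGraph n) : Matrix (Fin n) (Fin n) ℝ :=
  fun i j => if Γ.G.Adj i j then (Γ.sign i j : ℝ) else 0

/-- The largest eigenvalue (the index) of a signed graph. -/
noncomputable def lambda1 (Γ : SignedGraph n) : ℝ :=
  sSup (spectrum ℝ Γ.adjMatrix)

/-- The sign of an unordered edge. -/
def signEdge (Γ : SignedGraph n) : Sym2 (Fin n) → ℤ :=
  Sym2.lift ⟨Γ.sign, Γ.sign_symm⟩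

/-- The sign of a walk: the product of the signs of its edges. -/
def walkSign (Γ : SignedGraph n) {u v : Fin n} (w : Γ.G.Walk u v) : ℤ :=
  (w.edges.map Γ.signEdge).prod

/-- A negative cycle: a cycle whose sign is `-1`
(equivalently, with an odd number of negative edges). -/
def IsNegCycle (Γ : SignedGraph n) {u : Fin n} (c : Γ.G.Walk u u) : Prop :=
  c.IsCycle ∧ Γ.walkSign c = -1

/-- A signed graph is unbalanced if it contains a negative cycle. -/
def Unbalanced (Γ : SignedGraph n) : Prop :=
  ∃ (u : Fin n) (c : Γ.G.Walk u u), Γ.IsNegCycle c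

/-- A signed graph is negative-`C₄`-free if it contains no negative 4-cycle. -/
def NegC4Free (Γ : SignedGraph n) : Prop :=
  ∀ (u : Fin n) (c : Γ.G.Walk u u), c.IsCycle → c.length = 4 → Γ.walkSign c ≠ -1

end SignedGraph

/-- The signed graph `Γ₁`: vertices `2,…,n-1` induce an all-positive complete
graph, vertices `0` and `1` are joined to each other by a negative edge and to
vertex `2` by positive edges, and have no other neighbours. -/
def Gamma1 (n : ℕ) : SignedGraph n where
  G :=
    { Adj := fun i j => i ≠ j ∧ (2 ≤ min i.val j.val ∨ max i.val j.val ≤ 2)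
      symm := by
        constructor
        intro i j h
        refine ⟨Ne.symm h.1, ?_⟩
        rw [min_comm, max_comm]
        exact h.2
      loopless := by constructor; intro i h; exact h.1 rfl }
  sign := fun i j =>
    if (i.val = 0 ∧ j.val = 1) ∨ (i.val = 1 ∧ j.val = 0) then -1 else 1
  sign_symm := by
    intro i j
    try dsimp only
    by_cases h : (i.val = 0 ∧ j.val = 1) ∨ (i.val = 1 ∧ j.val = 0)
    · rw [if_pos h, if_pos (by tauto)]
    · rw [if_neg h, if_neg (by tauto)]
  sign_pm := by
    intro i j _
    try dsimp only
    by_cases h : (i.val = 0 ∧ j.val = 1) ∨ (i.val = 1 ∧ j.val = 0)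
    · rw [if_pos h]; right; rfl
    · rw [if_neg h]; left; rfl

/-- The signed graph `Γ₂`: vertices `4,…,n-1` induce an all-positive complete
graph, vertices `2` and `3` are joined by positive edges to all of `4,…,n-1`
(but not to each other), vertices `0` and `1` are joined to each other by a
negative edge and to `2` and `3` by positive edges, and have no other
neighbours. -/
def Gamma2 (n : ℕ) : SignedGraph n where
  G :=
    { Adj := fun i j => i ≠ j ∧
        ((i.val ≤ 1 ∧ j.val ≤ 3) ∨ (j.val ≤ 1 ∧ i.val ≤ 3) ∨
         (2 ≤ i.val ∧ i.val ≤ 3 ∧ 4 ≤ j.val) ∨ (2 ≤ j.val ∧ j.val ≤ 3 ∧ 4 ≤ i.val) ∨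
         (4 ≤ i.val ∧ 4 ≤ j.val))
      symm := by
        constructor
        intro i j h
        exact ⟨Ne.symm h.1, by tauto⟩
      loopless := by constructor; intro i h; exact h.1 rfl }
  sign := fun i j =>
    if (i.val = 0 ∧ j.val = 1) ∨ (i.val = 1 ∧ j.val = 0) then -1 else 1
  sign_symm := by
    intro i j
    try dsimp only
    by_cases h : (i.val = 0 ∧ j.val = 1) ∨ (i.val = 1 ∧ j.val = 0)
    · rw [if_pos h, if_pos (by tauto)]
    · rw [if_neg h, if_neg (by tauto)]
  sign_pm := by
    intro i j _
    try dsimp only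
    by_cases h : (i.val = 0 ∧ j.val = 1) ∨ (i.val = 1 ∧ j.val = 0)
    · rw [if_pos h]; right; rfl
    · rw [if_neg h]; left; rfl


/-- The all-negative complete signed graph `(K_n, -)`. -/
def NegKn (n : ℕ) : SignedGraph n where
  G := ⊤
  sign := fun _ _ => -1
  sign_symm := fun _ _ => rfl
  sign_pm := fun _ _ _ => Or.inr rfl

/-- `Γ` is switching equivalent to `Γ'` (up to a relabelling of the vertices):
there is a bijection of the vertices matching the underlying graphs and a
`±1`-valued switching function `s` relating the two sign functions. -/
def SwitchingEquiv {n : ℕ} (Γ Γ' : SignedGraph n) : Prop :=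
  ∃ e : Fin n ≃ Fin n, ∃ s : Fin n → ℤ, (∀ i, s i = 1 ∨ s i = -1) ∧
    (∀ i j, Γ.G.Adj i j ↔ Γ'.G.Adj (e i) (e j)) ∧
    (∀ i j, Γ.G.Adj i j → Γ.sign i j = s i * Γ'.sign (e i) (e j) * s j)

namespace SignedGraph
variable {n : ℕ}

lemma walkSign_nil (Γ : SignedGraph n) (u : Fin n) :
    Γ.walkSign (SimpleGraph.Walk.nil : Γ.G.Walk u u) = 1 := rfl

lemma walkSign_cons (Γ : SignedGraph n) {u v w : Fin n} (h : Γ.G.Adj u v) (p : Γ.G.Walk v w) :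
    Γ.walkSign (SimpleGraph.Walk.cons h p) = Γ.sign u v * Γ.walkSign p := by
  simp [walkSign, signEdge]

lemma walkSign_of_switch (Γ : SignedGraph n) (s : Fin n → ℤ) (hs : ∀ i, s i = 1 ∨ s i = -1)
    (hσ : ∀ i j, Γ.G.Adj i j → Γ.sign i j = s i * s j) :
    ∀ {u v : Fin n} (w : Γ.G.Walk u v), Γ.walkSign w = s u * s v := by
  intro u v w
  induction w with
  | nil =>
    rename_i a
    rw [walkSign_nil]
    rcases hs a with h | h <;> rw [h] <;> norm_num
  | cons h p ih =>
    rename_i a b c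
    have hsq : s b * s b = 1 := by rcases hs b with h' | h' <;> rw [h'] <;> norm_num
    rw [walkSign_cons, ih, hσ _ _ h]
    linear_combination (s a * s c) * hsq

def tri (Γ : SignedGraph n) {a b c : Fin n} (hab : Γ.G.Adj a b) (hbc : Γ.G.Adj b c)
    (hca : Γ.G.Adj c a) : Γ.G.Walk a a :=
  SimpleGraph.Walk.cons hab (SimpleGraph.Walk.cons hbc (SimpleGraph.Walk.cons hca
    SimpleGraph.Walk.nil))

lemma tri_isCycle (Γ : SignedGraph n) {a b c : Fin n} (hab : Γ.G.Adj a b) (hbc : Γ.G.Adj b c)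
    (hca : Γ.G.Adj c a) (hac : a ≠ c) : (Γ.tri hab hbc hca).IsCycle := by
  rw [SimpleGraph.Walk.isCycle_def]
  refine ⟨?_, ?_, ?_⟩
  · rw [SimpleGraph.Walk.isTrail_def]
    simp [tri, Sym2.eq, hab.ne, hab.ne', hbc.ne, hbc.ne', hac, Ne.symm hac, hca.ne, hca.ne']
  · simp [tri]
  · simp [tri, hab.ne, hab.ne', hbc.ne, hbc.ne', hac, Ne.symm hac, hca.ne, hca.ne']

lemma tri_walkSign (Γ : SignedGraph n) {a b c : Fin n} (hab : Γ.G.Adj a b) (hbc : Γ.G.Adj b c)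
    (hca : Γ.G.Adj c a) :
    Γ.walkSign (Γ.tri hab hbc hca) = Γ.sign a b * (Γ.sign b c * Γ.sign c a) := by
  simp [tri, walkSign_cons, walkSign_nil, mul_assoc]

def quad (Γ : SignedGraph n) {a b c d : Fin n} (hab : Γ.G.Adj a b) (hbc : Γ.G.Adj b c)
    (hcd : Γ.G.Adj c d) (hda : Γ.G.Adj d a) : Γ.G.Walk a a :=
  SimpleGraph.Walk.cons hab (SimpleGraph.Walk.cons hbc (SimpleGraph.Walk.cons hcd
    (SimpleGraph.Walk.cons hda SimpleGraph.Walk.nil)))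

lemma quad_isCycle (Γ : SignedGraph n) {a b c d : Fin n} (hab : Γ.G.Adj a b)
    (hbc : Γ.G.Adj b c) (hcd : Γ.G.Adj c d) (hda : Γ.G.Adj d a) (hac : a ≠ c) (hbd : b ≠ d) :
    (Γ.quad hab hbc hcd hda).IsCycle := by
  rw [SimpleGraph.Walk.isCycle_def]
  refine ⟨?_, ?_, ?_⟩
  · rw [SimpleGraph.Walk.isTrail_def]
    simp [quad, Sym2.eq, hab.ne, hab.ne', hbc.ne, hbc.ne', hcd.ne, hcd.ne', hda.ne, hda.ne',
      hac, Ne.symm hac, hbd, Ne.symm hbd]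
  · simp [quad]
  · simp [quad, hab.ne, hab.ne', hbc.ne, hbc.ne', hcd.ne, hcd.ne', hda.ne, hda.ne',
      hac, Ne.symm hac, hbd, Ne.symm hbd]

lemma quad_walkSign (Γ : SignedGraph n) {a b c d : Fin n} (hab : Γ.G.Adj a b)
    (hbc : Γ.G.Adj b c) (hcd : Γ.G.Adj c d) (hda : Γ.G.Adj d a) :
    Γ.walkSign (Γ.quad hab hbc hcd hda)
      = Γ.sign a b * (Γ.sign b c * (Γ.sign c d * Γ.sign d a)) := by
  simp [quad, walkSign_cons, walkSign_nil, mul_assoc]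

end SignedGraph
namespace SignedGraph
variable {n : ℕ}

lemma two_nonneighbors (Γ : SignedGraph n) (hub : Γ.Unbalanced) (hfree : Γ.NegC4Free)
    (hno3 : ∀ (u : Fin n) (c : Γ.G.Walk u u), c.IsCycle → c.length = 3 → Γ.walkSign c ≠ -1)
    (v : Fin n) :
    ∃ z1 z2 : Fin n, z1 ≠ z2 ∧ z1 ≠ v ∧ z2 ≠ v ∧ ¬Γ.G.Adj v z1 ∧ ¬Γ.G.Adj v z2 := by
  classical
  by_cases hex : ∃ z1 z2 : Fin n, z1 ≠ z2 ∧ (z1 ≠ v ∧ ¬Γ.G.Adj v z1) ∧ (z2 ≠ v ∧ ¬Γ.G.Adj v z2)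
  · obtain ⟨z1, z2, h12, ⟨h1, h1'⟩, ⟨h2, h2'⟩⟩ := hex
    exact ⟨z1, z2, h12, h1, h2, h1', h2'⟩
  exfalso
  push_neg at hex
  have hsmall : ∀ z1 z2 : Fin n, z1 ≠ v → ¬Γ.G.Adj v z1 → z2 ≠ v → ¬Γ.G.Adj v z2 → z1 = z2 := by
    intro z1 z2 a1 a2 b1 b2
    by_contra hne
    exact b2 (hex z1 z2 hne ⟨a1, a2⟩ b1)
  -- the switching function
  set s : Fin n → ℤ := fun w =>
    if hA : Γ.G.Adj v w then Γ.sign v w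
    else if hu : ∃ u, Γ.G.Adj w u then Γ.sign v hu.choose * Γ.sign w hu.choose else 1
    with hs_def
  -- chosen neighbours are adjacent to v
  have factC : ∀ (w : Fin n), ¬Γ.G.Adj v w → ∀ (hu : ∃ u, Γ.G.Adj w u),
      Γ.G.Adj v hu.choose ∧ Γ.G.Adj w hu.choose := by
    intro w hvw hu
    have hspec := hu.choose_spec
    refine ⟨?_, hspec⟩
    by_cases hwv : w = v
    · subst hwv; exact hspec
    · have hu0v : hu.choose ≠ v := by
        intro h
        exact hvw (Γ.G.adj_symm (h ▸ hspec))
      by_contra hvu0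
      exact hspec.ne (hsmall w hu.choose hwv hvw hu0v hvu0)
  have hs_pm : ∀ w, s w = 1 ∨ s w = -1 := by
    intro w
    rw [hs_def]
    by_cases hA : Γ.G.Adj v w
    · simp only [dif_pos hA]; exact Γ.sign_pm v w hA
    · simp only [dif_neg hA]
      by_cases hu : ∃ u, Γ.G.Adj w u
      · simp only [dif_pos hu]
        obtain ⟨hv0, hw0⟩ := factC w hA hu
        rcases Γ.sign_pm _ _ hv0 with h1 | h1 <;> rcases Γ.sign_pm _ _ hw0 with h2 | h2 <;>
          rw [h1, h2] <;> norm_num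
      · simp [dif_neg hu]
  have hsv : s v = 1 := by
    rw [hs_def]
    simp only [dif_neg (Γ.G.loopless.irrefl v)]
    by_cases hu : ∃ u, Γ.G.Adj v u
    · simp only [dif_pos hu]
      have := (factC v (Γ.G.loopless.irrefl v) hu).2
      rcases Γ.sign_pm _ _ this with h1 | h1 <;> rw [h1] <;> norm_num
    · simp [dif_neg hu]
  have hsn : ∀ w, Γ.G.Adj v w → s w = Γ.sign v w := by
    intro w hA
    rw [hs_def]
    simp only [dif_pos hA]
  -- triangle relation
  have htri : ∀ a b : Fin n, Γ.G.Adj v a → Γ.G.Adj v b → Γ.G.Adj a b →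
      Γ.sign a b = Γ.sign v a * Γ.sign v b := by
    intro a b hva hvb hab
    have hvb' : Γ.G.Adj b v := Γ.G.adj_symm hvb
    have hcyc := Γ.tri_isCycle hva hab hvb' hvb.ne
    have hlen : (Γ.tri hva hab hvb').length = 3 := rfl
    have hsign := Γ.tri_walkSign hva hab hvb'
    have hne := hno3 v _ hcyc hlen
    rw [hsign] at hne
    rw [Γ.sign_symm b v] at hne
    rcases Γ.sign_pm _ _ hva with h1 | h1 <;> rcases Γ.sign_pm _ _ hab with h2 | h2 <;>
      rcases Γ.sign_pm _ _ hvb with h3 | h3 <;> rw [h1, h2, h3] at hne ⊢ <;> norm_num at hne <;> norm_num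
  -- the key asymmetric case
  have key : ∀ a b : Fin n, a ≠ v → Γ.G.Adj a b → ¬Γ.G.Adj v a → Γ.G.Adj v b →
      Γ.sign a b = s a * s b := by
    intro a b hav hab hva hvb
    have hu : ∃ u, Γ.G.Adj a u := ⟨b, hab⟩
    obtain ⟨hvu0, hau0⟩ := factC a hva hu
    have hsa : s a = Γ.sign v hu.choose * Γ.sign a hu.choose := by
      rw [hs_def]; simp only [dif_neg hva, dif_pos hu]
    rw [hsa, hsn b hvb]
    set u0 := hu.choose with hu0
    by_cases hub0 : u0 = b
    · rw [hub0]
      rcases Γ.sign_pm _ _ hvb with h1 | h1 <;> rcases Γ.sign_pm _ _ hab with h2 | h2 <;>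
        rw [h1, h2] <;> norm_num
    · -- 4-cycle v u0 a b
      have hu0a : Γ.G.Adj u0 a := Γ.G.adj_symm hau0
      have hbv : Γ.G.Adj b v := Γ.G.adj_symm hvb
      have hva' : v ≠ a := Ne.symm hav
      have hcyc := Γ.quad_isCycle hvu0 hu0a hab hbv hva' hub0
      have hlen : (Γ.quad hvu0 hu0a hab hbv).length = 4 := rfl
      have hne := hfree v _ hcyc hlen
      rw [Γ.quad_walkSign hvu0 hu0a hab hbv] at hne
      rw [Γ.sign_symm u0 a, Γ.sign_symm b v] at hne
      rcases Γ.sign_pm _ _ hvu0 with h1 | h1 <;> rcases Γ.sign_pm _ _ hau0 with h2 | h2 <;>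
        rcases Γ.sign_pm _ _ hab with h3 | h3 <;> rcases Γ.sign_pm _ _ hvb with h4 | h4 <;>
        rw [h1, h2, h3, h4] at hne ⊢ <;> norm_num at hne <;> norm_num
  have hσ : ∀ a b : Fin n, Γ.G.Adj a b → Γ.sign a b = s a * s b := by
    intro a b hab
    by_cases hva : a = v
    · subst hva
      rw [hsv, hsn b hab, one_mul]
    by_cases hvb : b = v
    · subst hvb
      have hva' := Γ.G.adj_symm hab
      rw [hsv, hsn a hva', mul_one, Γ.sign_symm a b]
    by_cases hA : Γ.G.Adj v a
    · by_cases hB : Γ.G.Adj v b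
      · rw [htri a b hA hB hab, hsn a hA, hsn b hB]
      · rw [Γ.sign_symm a b, key b a hvb (Γ.G.adj_symm hab) hB hA, mul_comm]
    · by_cases hB : Γ.G.Adj v b
      · exact key a b hva hab hA hB
      · exact absurd (hsmall a b hva hA hvb hB) hab.ne
  obtain ⟨u, c, hcyc, hneg⟩ := hub
  have := Γ.walkSign_of_switch s hs_pm hσ c
  rw [hneg] at this
  rcases hs_pm u with h | h <;> rw [h] at this <;> norm_num at this

end SignedGraph

section Gamma1
variable {n : ℕ}

lemma gamma1_adj (i j : Fin n) :
    (Gamma1 n).G.Adj i j ↔ i ≠ j ∧ (2 ≤ min i.val j.val ∨ max i.val j.val ≤ 2) := Iff.rfl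

lemma gamma1_sign (i j : Fin n) :
    (Gamma1 n).sign i j
      = if (i.val = 0 ∧ j.val = 1) ∨ (i.val = 1 ∧ j.val = 0) then -1 else 1 := rfl

lemma gamma1_sign_eq_one {i j : Fin n}
    (h : ¬((i.val = 0 ∧ j.val = 1) ∨ (i.val = 1 ∧ j.val = 0))) : (Gamma1 n).sign i j = 1 := by
  rw [gamma1_sign, if_neg h]

lemma gamma1_unbalanced (hn : 6 ≤ n) : (Gamma1 n).Unbalanced := by
  set e0 : Fin n := ⟨0, by omega⟩
  set e1 : Fin n := ⟨1, by omega⟩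
  set e2 : Fin n := ⟨2, by omega⟩
  have h01 : (Gamma1 n).G.Adj e0 e1 := by
    rw [gamma1_adj]
    exact ⟨by simp [e0, e1, Fin.ext_iff], Or.inr (by simp [e0, e1])⟩
  have h12 : (Gamma1 n).G.Adj e1 e2 := by
    rw [gamma1_adj]
    exact ⟨by simp [e1, e2, Fin.ext_iff], Or.inr (by simp [e1, e2])⟩
  have h20 : (Gamma1 n).G.Adj e2 e0 := by
    rw [gamma1_adj]
    exact ⟨by simp [e2, e0, Fin.ext_iff], Or.inr (by simp [e2, e0])⟩
  have hne : e0 ≠ e2 := by simp [e0, e2, Fin.ext_iff]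
  refine ⟨e0, (Gamma1 n).tri h01 h12 h20, (Gamma1 n).tri_isCycle h01 h12 h20 hne, ?_⟩
  rw [SignedGraph.tri_walkSign]
  rw [gamma1_sign, gamma1_sign, gamma1_sign]
  norm_num [e0, e1, e2]

lemma gamma1_aux (w1 w2 w3 w4 : Fin n)
    (h23 : (Gamma1 n).G.Adj w2 w3) (h41 : (Gamma1 n).G.Adj w1 w4)
    (d12 : w1 ≠ w2) (d13 : w1 ≠ w3) (d14 : w1 ≠ w4) (d23 : w2 ≠ w3) (d24 : w2 ≠ w4)
    (d34 : w3 ≠ w4) (hv1 : w1.val = 0) (hv2 : w2.val = 1) : False := by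
  rw [gamma1_adj] at h23 h41
  have h3 : w3.val ≤ 2 := by
    rcases h23.2 with h | h
    · omega
    · omega
  have h4 : w4.val ≤ 2 := by
    rcases h41.2 with h | h
    · omega
    · omega
  rw [Ne, Fin.ext_iff] at d12 d13 d14 d23 d24 d34
  omega

lemma gamma1_negC4Free (hn : 6 ≤ n) : (Gamma1 n).NegC4Free := by
  intro u c hcyc hlen hsign
  cases c with
  | nil => simp at hlen
  | cons h1 p =>
    cases p with
    | nil => simp at hlen
    | cons h2 p =>
      cases p with
      | nil => simp at hlen
      | cons h3 p =>
        cases p with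
        | nil => simp at hlen
        | cons h4 p =>
          cases p with
          | cons h5 p => simp [SimpleGraph.Walk.length_cons] at hlen
          | nil =>
            rename_i a b d
            rw [SimpleGraph.Walk.isCycle_def] at hcyc
            obtain ⟨-, -, hnodup⟩ := hcyc
            simp only [SimpleGraph.Walk.support_cons, SimpleGraph.Walk.support_nil,
              List.tail_cons, List.nodup_cons, List.mem_cons, List.mem_singleton,
              List.not_mem_nil, or_false, List.nodup_nil, and_true,
              List.mem_singleton] at hnodup
            push_neg at hnodup
            obtain ⟨⟨hab, had, hau⟩, ⟨hbd, hbu⟩, hdu, -⟩ := hnodup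
            rw [SignedGraph.walkSign_cons, SignedGraph.walkSign_cons,
              SignedGraph.walkSign_cons, SignedGraph.walkSign_cons,
              SignedGraph.walkSign_nil] at hsign
            have hkey : ∀ p q : Fin n, (Gamma1 n).sign p q = -1 →
                (p.val = 0 ∧ q.val = 1) ∨ (p.val = 1 ∧ q.val = 0) := by
              intro p q h
              by_contra hc
              rw [gamma1_sign_eq_one hc] at h
              norm_num at h
            have h1' := (Gamma1 n).sign_pm _ _ h1
            have h2' := (Gamma1 n).sign_pm _ _ h2
            have h3' := (Gamma1 n).sign_pm _ _ h3
            have h4' := (Gamma1 n).sign_pm _ _ h4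
            have hdisj : (Gamma1 n).sign u a = -1 ∨ (Gamma1 n).sign a b = -1 ∨
                (Gamma1 n).sign b d = -1 ∨ (Gamma1 n).sign d u = -1 := by
              by_contra hc
              push_neg at hc
              obtain ⟨c1, c2, c3, c4⟩ := hc
              rw [h1'.resolve_right c1, h2'.resolve_right c2, h3'.resolve_right c3,
                h4'.resolve_right c4] at hsign
              norm_num at hsign
            have sy := @SimpleGraph.adj_symm _ (Gamma1 n).G
            rcases hdisj with e | e | e | e <;> rcases hkey _ _ e with ⟨p0, q1⟩ | ⟨p1, q0⟩
            · exact gamma1_aux u a b d h2 (sy h4) (Ne.symm hau) (Ne.symm hbu) (Ne.symm hdu) hab had hbd p0 q1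
            · exact gamma1_aux a u d b (sy h4) h2 hau had hab (Ne.symm hdu) (Ne.symm hbu) (Ne.symm hbd) q0 p1
            · exact gamma1_aux a b d u h3 (sy h1) hab had hau hbd hbu hdu p0 q1
            · exact gamma1_aux b a u d (sy h1) h3 (Ne.symm hab) hbu hbd hau had (Ne.symm hdu) q0 p1
            · exact gamma1_aux b d u a h4 (sy h2) hbd hbu (Ne.symm hab) hdu (Ne.symm had) (Ne.symm hau) p0 q1
            · exact gamma1_aux d b a u (sy h2) h4 (Ne.symm hbd) (Ne.symm had) hdu (Ne.symm hab) hbu hau q0 p1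
            · exact gamma1_aux d u a b h1 (sy h3) hdu (Ne.symm had) (Ne.symm hbd) (Ne.symm hau) (Ne.symm hbu) hab p0 q1
            · exact gamma1_aux u d b a (sy h3) h1 (Ne.symm hdu) (Ne.symm hbu) (Ne.symm hau) (Ne.symm hbd) (Ne.symm had) (Ne.symm hab) q0 p1

end Gamma1

section Spectral
open Matrix

lemma spec_le_rowsum {n : ℕ} (hn : 0 < n) (A : Matrix (Fin n) (Fin n) ℝ) (c : ℝ)
    (h : ∀ i, ∑ j, |A i j| ≤ c) : ∀ μ ∈ spectrum ℝ A, μ ≤ c := by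
  intro μ hμ
  rw [spectrum.mem_iff] at hμ
  have hdet : (algebraMap ℝ (Matrix (Fin n) (Fin n) ℝ) μ - A).det = 0 := by
    by_contra hd
    exact hμ ((Matrix.isUnit_iff_isUnit_det _).2 (isUnit_iff_ne_zero.2 hd))
  obtain ⟨v, hv0, hv⟩ := (Matrix.exists_mulVec_eq_zero_iff).2 hdet
  have hAv : ∀ i, A.mulVec v i = μ * v i := by
    intro i
    have h1 := congrFun hv i
    rw [Matrix.sub_mulVec] at h1
    simp only [Pi.sub_apply, Pi.zero_apply, sub_eq_zero] at h1
    rw [← h1, Algebra.algebraMap_eq_smul_one, Matrix.smul_mulVec, Matrix.one_mulVec]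
    simp
  haveI : Nonempty (Fin n) := ⟨⟨0, hn⟩⟩
  obtain ⟨i, -, hi⟩ := Finset.exists_max_image Finset.univ (fun j => |v j|)
    ⟨Classical.arbitrary (Fin n), Finset.mem_univ _⟩
  have hvi : 0 < |v i| := by
    obtain ⟨k, hk⟩ := Function.ne_iff.1 hv0
    exact lt_of_lt_of_le (abs_pos.2 hk) (hi k (Finset.mem_univ _))
  have habs : |μ| * |v i| ≤ c * |v i| := by
    calc |μ| * |v i| = |A.mulVec v i| := by rw [← abs_mul, hAv]
    _ = |∑ j, A i j * v j| := by rw [Matrix.mulVec, dotProduct]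
    _ ≤ ∑ j, |A i j * v j| := Finset.abs_sum_le_sum_abs _ _
    _ ≤ ∑ j, |A i j| * |v i| := by
        refine Finset.sum_le_sum fun j _ => ?_
        rw [abs_mul]
        exact mul_le_mul_of_nonneg_left (hi j (Finset.mem_univ _)) (abs_nonneg _)
    _ = (∑ j, |A i j|) * |v i| := by rw [Finset.sum_mul]
    _ ≤ c * |v i| := mul_le_mul_of_nonneg_right (h i) (le_of_lt hvi)
  exact le_trans (le_abs_self μ) (le_of_mul_le_mul_right habs hvi)

lemma rayleigh_le {n : ℕ} (A : Matrix (Fin n) (Fin n) ℝ) (hA : A.IsHermitian) (t : ℝ)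
    (ht : ∀ μ ∈ spectrum ℝ A, μ ≤ t) (y : Fin n → ℝ) :
    y ⬝ᵥ A.mulVec y ≤ t * (y ⬝ᵥ y) := by
  classical
  set U : Matrix (Fin n) (Fin n) ℝ := (hA.eigenvectorUnitary : Matrix (Fin n) (Fin n) ℝ) with hU
  have hspec := hA.spectral_theorem
  set D : Matrix (Fin n) (Fin n) ℝ := diagonal (RCLike.ofReal ∘ hA.eigenvalues) with hD
  set c : Fin n → ℝ := (star U).mulVec y with hc
  have hsU : (star U)ᵀ = U := by
    rw [Matrix.star_eq_conjTranspose, Matrix.conjTranspose_eq_transpose_of_trivial,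
      Matrix.transpose_transpose]
  have hsU' : Uᵀ = star U := by
    rw [Matrix.star_eq_conjTranspose, Matrix.conjTranspose_eq_transpose_of_trivial]
  have hcc : c ⬝ᵥ c = y ⬝ᵥ y := by
    rw [hc, Matrix.dotProduct_mulVec, ← Matrix.mulVec_transpose, hsU, Matrix.mulVec_mulVec]
    have : U * star U = 1 := Matrix.mem_unitaryGroup_iff.mp hA.eigenvectorUnitary.2
    rw [this, Matrix.one_mulVec]
  have hQ : y ⬝ᵥ A.mulVec y = ∑ i, hA.eigenvalues i * (c i)^2 := by
    conv_lhs => rw [hspec, Unitary.conjStarAlgAut_apply]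
    rw [← Matrix.mulVec_mulVec, ← Matrix.mulVec_mulVec,
      Matrix.dotProduct_mulVec (v := y), ← Matrix.mulVec_transpose, hsU', ← hc,
      dotProduct, hD]
    refine Finset.sum_congr rfl fun i _ => ?_
    rw [Matrix.mulVec_diagonal]
    simp [RCLike.ofReal]
    ring
  rw [hQ, ← hcc]
  calc ∑ i, hA.eigenvalues i * (c i)^2 ≤ ∑ i, t * (c i)^2 := by
        refine Finset.sum_le_sum fun i _ => ?_
        exact mul_le_mul_of_nonneg_right (ht _ (hA.eigenvalues_mem_spectrum_real i)) (sq_nonneg _)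
    _ = t * (c ⬝ᵥ c) := by
        rw [← Finset.mul_sum]
        congr 1
        rw [dotProduct]
        exact Finset.sum_congr rfl fun i _ => by ring

namespace SignedGraph
variable {n : ℕ}

open Classical in
lemma adjMatrix_apply (Γ : SignedGraph n) (i j : Fin n) :
    Γ.adjMatrix i j = if Γ.G.Adj i j then (Γ.sign i j : ℝ) else 0 := rfl

lemma adjMatrix_isHermitian (Γ : SignedGraph n) : Γ.adjMatrix.IsHermitian := by
  rw [Matrix.IsHermitian]
  ext i j
  rw [Matrix.conjTranspose_apply, adjMatrix_apply, adjMatrix_apply]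
  by_cases h : Γ.G.Adj i j
  · rw [if_pos h, if_pos (Γ.G.adj_symm h), Γ.sign_symm j i]
    simp
  · rw [if_neg h, if_neg (fun h' => h (Γ.G.adj_symm h'))]
    simp

lemma adjMatrix_abs_le_one (Γ : SignedGraph n) (i j : Fin n) : |Γ.adjMatrix i j| ≤ 1 := by
  rw [adjMatrix_apply]
  by_cases h : Γ.G.Adj i j
  · rw [if_pos h]
    rcases Γ.sign_pm i j h with hs | hs <;> rw [hs] <;> norm_num
  · rw [if_neg h]; norm_num

lemma rowsum_le_n (Γ : SignedGraph n) (i : Fin n) : ∑ j, |Γ.adjMatrix i j| ≤ (n : ℝ) := by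
  calc ∑ j, |Γ.adjMatrix i j| ≤ ∑ _j : Fin n, (1:ℝ) :=
        Finset.sum_le_sum fun j _ => Γ.adjMatrix_abs_le_one i j
    _ = (n : ℝ) := by simp

lemma spectrum_bddAbove (Γ : SignedGraph n) (hn : 0 < n) :
    BddAbove (spectrum ℝ Γ.adjMatrix) :=
  ⟨(n : ℝ), fun μ hμ => spec_le_rowsum hn Γ.adjMatrix (n : ℝ) (Γ.rowsum_le_n) μ hμ⟩

lemma lambda1_rayleigh (Γ : SignedGraph n) (hn : 0 < n) (y : Fin n → ℝ) :
    y ⬝ᵥ Γ.adjMatrix.mulVec y ≤ Γ.lambda1 * (y ⬝ᵥ y) :=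
  rayleigh_le Γ.adjMatrix Γ.adjMatrix_isHermitian Γ.lambda1
    (fun _ hμ => le_csSup (Γ.spectrum_bddAbove hn) hμ) y

lemma lambda1_le (Γ : SignedGraph n) (hn : 0 < n) (c : ℝ) (hc : 0 ≤ c)
    (h : ∀ i, ∑ j, |Γ.adjMatrix i j| ≤ c) : Γ.lambda1 ≤ c :=
  Real.sSup_le (spec_le_rowsum hn Γ.adjMatrix c h) hc

lemma rowsum_bound (Γ : SignedGraph n) (i z1 z2 : Fin n) (hz : z1 ≠ z2) (h1 : z1 ≠ i)
    (h2 : z2 ≠ i) (ha1 : ¬Γ.G.Adj i z1) (ha2 : ¬Γ.G.Adj i z2) :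
    ∑ j, |Γ.adjMatrix i j| ≤ (n : ℝ) - 3 := by
  classical
  set s : Finset (Fin n) := {i, z1, z2} with hs
  have hcard : s.card = 3 := by
    rw [hs]
    rw [Finset.card_insert_of_notMem (by simp [Ne.symm h1, Ne.symm h2]),
      Finset.card_insert_of_notMem (by simp [hz])]
    simp
  have hpt : ∀ j, |Γ.adjMatrix i j| ≤ 1 - (if j ∈ s then (1:ℝ) else 0) := by
    intro j
    by_cases hj : j ∈ s
    · rw [if_pos hj]
      have : Γ.adjMatrix i j = 0 := by
        rw [adjMatrix_apply, if_neg]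
        rcases Finset.mem_insert.1 hj with h | h
        · subst h; exact Γ.G.loopless.irrefl j
        rcases Finset.mem_insert.1 h with h' | h'
        · subst h'; exact ha1
        · rw [Finset.mem_singleton] at h'; subst h'; exact ha2
      rw [this]
      norm_num
    · rw [if_neg hj]
      simpa using Γ.adjMatrix_abs_le_one i j
  calc ∑ j, |Γ.adjMatrix i j| ≤ ∑ j, (1 - (if j ∈ s then (1:ℝ) else 0)) :=
        Finset.sum_le_sum fun j _ => hpt j
    _ = (n : ℝ) - 3 := by
        rw [Finset.sum_sub_distrib]
        simp only [Finset.sum_const, Finset.card_univ, Fintype.card_fin, nsmul_eq_mul, mul_one]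
        congr 1
        rw [Finset.sum_ite_mem]
        rw [Finset.univ_inter, Finset.sum_const, hcard]
        norm_num

end SignedGraph
end Spectral

section Gamma1Spec
open Matrix
variable {n : ℕ}

lemma gamma1_adjMatrix_val (i j : Fin n) :
    (Gamma1 n).adjMatrix i j =
      if i = j then 0
      else if (i.val = 0 ∧ j.val = 1) ∨ (i.val = 1 ∧ j.val = 0) then -1
      else if 2 ≤ min i.val j.val ∨ max i.val j.val ≤ 2 then 1
      else 0 := by
  classical
  rw [SignedGraph.adjMatrix_apply]
  by_cases hij : i = j
  · subst hij
    rw [if_pos rfl, if_neg ((Gamma1 n).G.loopless.irrefl i)]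
  · rw [if_neg hij]
    by_cases hcond : 2 ≤ min i.val j.val ∨ max i.val j.val ≤ 2
    · have hAdj : (Gamma1 n).G.Adj i j := (gamma1_adj i j).2 ⟨hij, hcond⟩
      rw [if_pos hAdj, gamma1_sign]
      by_cases hneg : (i.val = 0 ∧ j.val = 1) ∨ (i.val = 1 ∧ j.val = 0)
      · rw [if_pos hneg, if_pos hneg]; norm_num
      · rw [if_neg hneg, if_neg hneg, if_pos hcond]; norm_num
    · have hAdj : ¬(Gamma1 n).G.Adj i j := fun h => hcond ((gamma1_adj i j).1 h).2
      rw [if_neg hAdj]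
      by_cases hneg : (i.val = 0 ∧ j.val = 1) ∨ (i.val = 1 ∧ j.val = 0)
      · exfalso
        push_neg at hcond
        rcases hneg with ⟨h1, h2⟩ | ⟨h1, h2⟩ <;> omega
      · rw [if_neg hneg, if_neg hcond]

lemma gamma1_lambda1_gt (hn : 6 ≤ n) : (n : ℝ) - 3 < (Gamma1 n).lambda1 := by
  classical
  have hnR : (6 : ℝ) ≤ (n : ℝ) := by exact_mod_cast hn
  set c : ℝ := (n : ℝ) - 2 with hcdef
  set y : Fin n → ℝ := fun i => if 2 ≤ i.val then c else 1 with hy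
  set e0 : Fin n := ⟨0, by omega⟩ with he0
  set e1 : Fin n := ⟨1, by omega⟩ with he1
  set e2 : Fin n := ⟨2, by omega⟩ with he2
  -- cardinalities
  have hc2 : (Finset.univ.filter (fun i : Fin n => 2 ≤ i.val)).card = n - 2 := by
    have h1 : (Finset.univ.filter (fun i : Fin n => 2 ≤ i.val))
        = Finset.Ici (⟨2, by omega⟩ : Fin n) := by
      ext i
      simp [Finset.mem_Ici, Fin.le_def]
    rw [h1, Fin.card_Ici]
  have hc3 : (Finset.univ.filter (fun i : Fin n => 3 ≤ i.val)).card = n - 3 := by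
    have h1 : (Finset.univ.filter (fun i : Fin n => 3 ≤ i.val))
        = Finset.Ici (⟨3, by omega⟩ : Fin n) := by
      ext i
      simp [Finset.mem_Ici, Fin.le_def]
    rw [h1, Fin.card_Ici]
  have hcn2 : (Finset.univ.filter (fun i : Fin n => ¬ 2 ≤ i.val)).card = 2 := by
    have := Finset.card_filter_add_card_filter_not
      (s := (Finset.univ : Finset (Fin n))) (p := fun i : Fin n => 2 ≤ i.val)
    rw [Finset.card_univ, Fintype.card_fin, hc2] at this
    omega
  have hsum_gen : ∀ a b : ℝ, ∑ j : Fin n, (if 2 ≤ j.val then a else b)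
      = ((n : ℝ) - 2) * a + 2 * b := by
    intro a b
    rw [Finset.sum_ite, Finset.sum_const, Finset.sum_const, hc2, hcn2]
    have : ((n - 2 : ℕ) : ℝ) = (n : ℝ) - 2 := by
      have : 2 ≤ n := by omega
      push_cast [Nat.cast_sub this]
      ring
    rw [nsmul_eq_mul, nsmul_eq_mul, this]
    push_cast
    ring
  have hsum3_gen : ∀ a : ℝ, ∑ j : Fin n, (if 3 ≤ j.val then a else 0)
      = ((n : ℝ) - 3) * a := by
    intro a
    rw [Finset.sum_ite, Finset.sum_const, Finset.sum_const, hc3]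
    have : ((n - 3 : ℕ) : ℝ) = (n : ℝ) - 3 := by
      have : 3 ≤ n := by omega
      push_cast [Nat.cast_sub this]
      ring
    rw [nsmul_eq_mul, nsmul_eq_mul, this]
    ring
  have hsumy : ∑ j, y j = ((n : ℝ) - 2) * c + 2 := by
    rw [hy]
    rw [hsum_gen c 1]
    ring
  have hN : y ⬝ᵥ y = ((n : ℝ) - 2) * (c * c) + 2 := by
    rw [dotProduct]
    have : ∀ j : Fin n, y j * y j = (if 2 ≤ j.val then c * c else 1) := by
      intro j
      rw [hy]
      by_cases h : 2 ≤ j.val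
      · rw [if_pos h]; simp [if_pos h]
      · rw [if_neg h]; simp [if_neg h]
    rw [Finset.sum_congr rfl fun j _ => this j, hsum_gen (c * c) 1]
    ring
  -- the rows of the product
  have hrow : ∀ i : Fin n, (Gamma1 n).adjMatrix.mulVec y i =
      if i.val ≤ 1 then c - 1 else if i.val = 2 then 2 + ((n : ℝ) - 3) * c
      else ((n : ℝ) - 3) * c := by
    intro i
    rw [Matrix.mulVec, dotProduct]
    by_cases h0 : i.val ≤ 1
    · -- i is e0 or e1
      have hio : ∃ o : Fin n, o.val ≤ 1 ∧ o ≠ i ∧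
          (((i.val = 0 ∧ o.val = 1) ∨ (i.val = 1 ∧ o.val = 0))) := by
        rcases Nat.le_one_iff_eq_zero_or_eq_one.1 h0 with h | h
        · exact ⟨e1, by simp [he1], by simp [he1, Fin.ext_iff]; omega, Or.inl ⟨h, by simp [he1]⟩⟩
        · exact ⟨e0, by simp [he0], by simp [he0, Fin.ext_iff]; omega, Or.inr ⟨h, by simp [he0]⟩⟩
      obtain ⟨o, ho1, hoi, hpair⟩ := hio
      have hpt : ∀ j : Fin n, (Gamma1 n).adjMatrix i j * y j
          = (if j = o then (-1 : ℝ) else 0) + (if j = e2 then c else 0) := by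
        intro j
        rw [gamma1_adjMatrix_val]
        by_cases hjo : j = o
        · subst hjo
          rw [if_neg (Ne.symm hoi), if_pos (by tauto), if_pos rfl,
            if_neg (by rw [he2, Fin.ext_iff]; simp; omega)]
          rw [hy]
          simp only
          rw [if_neg (by omega)]
          ring
        · by_cases hj2 : j = e2
          · subst hj2
            have hv2 : (e2 : Fin n).val = 2 := by rw [he2]
            rw [if_neg (by rw [Fin.ext_iff]; omega), if_neg (by omega),
              if_pos (by right; omega), if_neg hjo, if_pos rfl]
            rw [hy]
            simp only
            rw [if_pos (by omega)]
            ring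
          · have hjv : j = i ∨ 3 ≤ j.val := by
              by_cases hji : j = i
              · exact Or.inl hji
              · right
                have h1 : j.val ≠ i.val := fun h => hji (Fin.ext h)
                have h2 : j.val ≠ o.val := fun h => hjo (Fin.ext h)
                have h3 : j.val ≠ 2 := fun h => hj2 (by rw [he2, Fin.ext_iff]; exact h)
                omega
            rw [if_neg hjo, if_neg hj2]
            rcases hjv with hji | hj3
            · subst hji
              rw [if_pos rfl]
              ring
            · rw [if_neg (by rw [Fin.ext_iff]; omega), if_neg (by omega),
                if_neg (by push_neg; constructor <;> omega)]
              ring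
      rw [Finset.sum_congr rfl fun j _ => hpt j, Finset.sum_add_distrib,
        Finset.sum_ite_eq' Finset.univ o (fun _ => (-1 : ℝ)),
        Finset.sum_ite_eq' Finset.univ e2 (fun _ => c)]
      rw [if_pos (Finset.mem_univ _), if_pos (Finset.mem_univ _), if_pos h0]
      ring
    · by_cases h2 : i.val = 2
      · have hpt : ∀ j : Fin n, (Gamma1 n).adjMatrix i j * y j
            = y j - (if j = i then c else 0) := by
          intro j
          rw [gamma1_adjMatrix_val]
          by_cases hji : j = i
          · subst hji
            rw [if_pos rfl, if_pos rfl]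
            rw [hy]
            simp only
            rw [if_pos (by omega)]
            ring
          · have hjv : j.val ≠ 2 := fun h => hji (Fin.ext (by omega))
            rw [if_neg (fun h => hji h.symm), if_neg (by omega),
              if_pos (by omega), if_neg hji]
            ring
        rw [Finset.sum_congr rfl fun j _ => hpt j, Finset.sum_sub_distrib,
          Finset.sum_ite_eq' Finset.univ i (fun _ => c), if_pos (Finset.mem_univ _), hsumy]
        rw [if_neg h0, if_pos h2]
        ring
      · have h3 : 3 ≤ i.val := by omega
        have hpt : ∀ j : Fin n, (Gamma1 n).adjMatrix i j * y j
            = (if 2 ≤ j.val then c else 0) - (if j = i then c else 0) := by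
          intro j
          rw [gamma1_adjMatrix_val]
          by_cases hji : j = i
          · subst hji
            rw [if_pos rfl, if_pos (by omega), if_pos rfl]
            ring
          · rw [if_neg (fun h => hji h.symm), if_neg (by omega), if_neg hji]
            by_cases hj2 : 2 ≤ j.val
            · rw [if_pos (by left; omega), if_pos hj2]
              rw [hy]
              simp only
              rw [if_pos hj2]
              ring
            · rw [if_neg (by push_neg; constructor <;> omega), if_neg hj2]
              ring
        rw [Finset.sum_congr rfl fun j _ => hpt j, Finset.sum_sub_distrib,
          Finset.sum_ite_eq' Finset.univ i (fun _ => c), if_pos (Finset.mem_univ _)]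
        have : ∑ j : Fin n, (if 2 ≤ j.val then c else (0:ℝ)) = ((n : ℝ) - 2) * c + 2 * 0 :=
          hsum_gen c 0
        rw [this]
        rw [if_neg h0, if_neg h2]
        ring
  -- the quadratic form
  have hQ : y ⬝ᵥ (Gamma1 n).adjMatrix.mulVec y
      = 2 * (c - 1) + c * (2 + ((n : ℝ) - 3) * c) + ((n : ℝ) - 3) * (c * (((n : ℝ) - 3) * c)) := by
    rw [dotProduct]
    have hpt : ∀ i : Fin n, y i * (Gamma1 n).adjMatrix.mulVec y i
        = (if i = e0 then c - 1 else 0) + (if i = e1 then c - 1 else 0)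
          + (if i = e2 then c * (2 + ((n : ℝ) - 3) * c) else 0)
          + (if 3 ≤ i.val then c * (((n : ℝ) - 3) * c) else 0) := by
      intro i
      rw [hrow i, hy]
      simp only
      by_cases h0 : i = e0
      · have hvi : i.val = 0 := by rw [h0]
        rw [if_pos h0, if_neg (show ¬ i = e1 from fun h => by rw [h] at hvi; exact one_ne_zero hvi),
          if_neg (show ¬ i = e2 from fun h => by rw [h] at hvi; exact two_ne_zero hvi),
          if_neg (show ¬ 2 ≤ i.val by omega), if_pos (show i.val ≤ 1 by omega),
          if_neg (show ¬ 3 ≤ i.val by omega)]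
        ring
      · by_cases h1 : i = e1
        · have hvi : i.val = 1 := by rw [h1]
          rw [if_neg h0, if_pos h1,
            if_neg (show ¬ i = e2 from fun h => by rw [h] at hvi; exact absurd hvi (by norm_num)),
            if_neg (show ¬ 2 ≤ i.val by omega), if_pos (show i.val ≤ 1 by omega),
            if_neg (show ¬ 3 ≤ i.val by omega)]
          ring
        · by_cases h2 : i = e2
          · have hvi : i.val = 2 := by rw [h2]
            rw [if_neg h0, if_neg h1, if_pos h2,
              if_pos (show 2 ≤ i.val by omega), if_neg (show ¬ i.val ≤ 1 by omega),
              if_pos (show i.val = 2 by omega), if_neg (show ¬ 3 ≤ i.val by omega)]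
            ring
          · have hv0 : i.val ≠ 0 := fun h => h0 (Fin.ext h)
            have hv1 : i.val ≠ 1 := fun h => h1 (Fin.ext h)
            have hv2 : i.val ≠ 2 := fun h => h2 (Fin.ext h)
            rw [if_neg h0, if_neg h1, if_neg h2,
              if_pos (show 2 ≤ i.val by omega), if_neg (show ¬ i.val ≤ 1 by omega),
              if_neg (show ¬ i.val = 2 by omega), if_pos (show 3 ≤ i.val by omega)]
            ring
    rw [Finset.sum_congr rfl fun i _ => hpt i]
    rw [Finset.sum_add_distrib, Finset.sum_add_distrib, Finset.sum_add_distrib,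
      Finset.sum_ite_eq' Finset.univ e0, Finset.sum_ite_eq' Finset.univ e1,
      Finset.sum_ite_eq' Finset.univ e2, hsum3_gen]
    rw [if_pos (Finset.mem_univ _), if_pos (Finset.mem_univ _), if_pos (Finset.mem_univ _)]
    ring
  -- conclude
  have hray := (Gamma1 n).lambda1_rayleigh (by omega) y
  by_contra hcon
  push_neg at hcon
  have hNpos : (0:ℝ) < y ⬝ᵥ y := by
    rw [hN]
    nlinarith [sq_nonneg c]
  have hle : (Gamma1 n).lambda1 * (y ⬝ᵥ y) ≤ ((n:ℝ) - 3) * (y ⬝ᵥ y) :=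
    mul_le_mul_of_nonneg_right hcon (le_of_lt hNpos)
  have hQle : y ⬝ᵥ (Gamma1 n).adjMatrix.mulVec y ≤ ((n:ℝ) - 3) * (y ⬝ᵥ y) :=
    le_trans hray hle
  rw [hQ, hN] at hQle
  rw [hcdef] at hQle
  nlinarith [hQle, hnR]

end Gamma1Spec

theorem extremal_contains_negative_triangle
    (n : ℕ) (hn : 6 ≤ n) (Γ' : SignedGraph n)
    (hub : Γ'.Unbalanced) (hfree : Γ'.NegC4Free)
    (hmax : ∀ Γ : SignedGraph n, Γ.Unbalanced → Γ.NegC4Free → Γ.lambda1 ≤ Γ'.lambda1)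
    (x : Fin n → ℝ) (hx : Γ'.adjMatrix.mulVec x = Γ'.lambda1 • x)
    (hnn : ∀ i, 0 ≤ x i) (hunit : ∑ i, x i ^ 2 = 1) :
    ∃ (u : Fin n) (c : Γ'.G.Walk u u), c.IsCycle ∧ c.length = 3 ∧
      Γ'.walkSign c = -1 := by
  by_contra hno3'
  push_neg at hno3'
  have hno3 : ∀ (u : Fin n) (c : Γ'.G.Walk u u), c.IsCycle → c.length = 3 →
      Γ'.walkSign c ≠ -1 := fun u c h1 h2 => hno3' u c h1 h2
  have htwo := Γ'.two_nonneighbors hub hfree hno3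
  have hrow : ∀ i, ∑ j, |Γ'.adjMatrix i j| ≤ (n : ℝ) - 3 := by
    intro i
    obtain ⟨z1, z2, hz, h1, h2, ha1, ha2⟩ := htwo i
    exact Γ'.rowsum_bound i z1 z2 hz h1 h2 ha1 ha2
  have hnR : (6 : ℝ) ≤ (n : ℝ) := by exact_mod_cast hn
  have hup : Γ'.lambda1 ≤ (n : ℝ) - 3 :=
    Γ'.lambda1_le (by omega) _ (by linarith) hrow
  have hmax1 := hmax (Gamma1 n) (gamma1_unbalanced hn) (gamma1_negC4Free hn)
  have hgt := gamma1_lambda1_gt hn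
  linarith
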